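/- arXiv:1602.06864 — 2 statements merged into one kernel-verified Lean document; each statement's English description precedes it below -/
import Mathlib

section
/- Let K be a non-degenerate d-simplex with vertices Q_0, …, Q_d and let κ = min_j κ_j be the minimum height of K. Let r ∈ [1, ∞) and let v be an affine function on K with v(Q_j) = v_j. Then ‖∇v‖_{L^r(K)} ≤ ((d+1)/κ) · (|K| · ∑_{j=0}^d |v_j|^r)^{1/r} · (d+1)^{−1/r}, i.e., ‖∇v‖_{L^r(K)} ≤ ((d+1)/κ) ‖M v‖_{L^r(K)} where ‖M v‖_{L^r(K)} = (|K|/(d+1) ∑_{j=0}^d |v_j|^r)^{1/r}. -/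
open MeasureTheory

section Stmt6Aux

local notation "E" d => EuclideanSpace ℝ (Fin d)

private lemma stmt6_coord_bound (d : ℕ) (hd : 1 ≤ d)
    (Q : Fin (d + 1) → EuclideanSpace ℝ (Fin d))
    (hQ : AffineIndependent ℝ Q) (hspan : affineSpan ℝ (Set.range Q) = ⊤)
    (j : Fin (d + 1)) :
    Metric.infDist (Q j) ((affineSpan ℝ (Q '' {i | i ≠ j}) :
        AffineSubspace ℝ (EuclideanSpace ℝ (Fin d))) : Set (EuclideanSpace ℝ (Fin d)))
      * ‖LinearMap.toContinuousLinearMap ((AffineBasis.mk Q hQ hspan).coord j).linear‖ ≤ 1 := by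
  classical
  set b : AffineBasis (Fin (d + 1)) ℝ (EuclideanSpace ℝ (Fin d)) := AffineBasis.mk Q hQ hspan
  have hbQ : ∀ i, b i = Q i := fun i => rfl
  set ℓ : (EuclideanSpace ℝ (Fin d)) →ₗ[ℝ] ℝ := (b.coord j).linear with hℓ
  set φ : (EuclideanSpace ℝ (Fin d)) →L[ℝ] ℝ := LinearMap.toContinuousLinearMap ℓ with hφdef
  by_cases hφ : φ = 0
  · rw [hφ]
    simp [Metric.infDist_nonneg]
  -- the dual vector
  set w : EuclideanSpace ℝ (Fin d) := (InnerProductSpace.toDual ℝ _).symm φ with hw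
  have hφw : ∀ x, inner ℝ w x = φ x := fun x => InnerProductSpace.toDual_symm_apply
  have hnw : ‖w‖ = ‖φ‖ := LinearIsometryEquiv.norm_map _ _
  have hw0 : w ≠ 0 := by
    intro h
    apply hφ
    ext x
    have hx := hφw x
    rw [h] at hx
    simpa using hx.symm
  have hwpos : (0:ℝ) < ‖w‖ := norm_pos_iff.mpr hw0
  set S : AffineSubspace ℝ (EuclideanSpace ℝ (Fin d)) := affineSpan ℝ (Q '' {i | i ≠ j}) with hS
  -- a point i0 ≠ j
  have hnontriv : Nontrivial (Fin (d + 1)) := by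
    constructor
    refine ⟨⟨0, by omega⟩, ⟨1, by omega⟩, ?_⟩
    simp [Fin.ext_iff]
  obtain ⟨i0, hi0⟩ := @exists_ne _ hnontriv j
  have hQi0 : Q i0 ∈ S := by
    apply subset_affineSpan
    exact Set.mem_image_of_mem Q hi0
  -- the direction of S is the kernel of ℓ
  have hcoordQ : ∀ i, i ≠ j → b.coord j (Q i) = 0 := by
    intro i hi
    rw [← hbQ i]
    exact b.coord_apply_ne (Ne.symm hi)
  have hle : S.direction ≤ LinearMap.ker ℓ := by
    rw [hS, direction_affineSpan, vectorSpan_def, Submodule.span_le]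
    rintro u hu
    obtain ⟨x, hx, y, hy, rfl⟩ := hu
    obtain ⟨ix, hix, rfl⟩ := hx
    obtain ⟨iy, hiy, rfl⟩ := hy
    simp only [SetLike.mem_coe, LinearMap.mem_ker]
    have : ℓ (Q ix -ᵥ Q iy) = b.coord j (Q ix) -ᵥ b.coord j (Q iy) :=
      (b.coord j).linearMap_vsub _ _
    rw [this, hcoordQ ix hix, hcoordQ iy hiy]
    simp
  have hℓ0 : ℓ ≠ 0 := by
    intro h
    apply hφ
    ext x
    simp [hφdef, h]
  have hrank : Module.finrank ℝ (LinearMap.ker ℓ) = d - 1 := by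
    have hr : LinearMap.range ℓ = ⊤ := by
      rcases LinearMap.surjective_of_ne_zero hℓ0 with h
      exact LinearMap.range_eq_top.mpr h
    have := LinearMap.finrank_range_add_finrank_ker ℓ
    rw [hr, finrank_top] at this
    have h1 : Module.finrank ℝ ℝ = 1 := Module.finrank_self ℝ
    have h2 : Module.finrank ℝ (EuclideanSpace ℝ (Fin d)) = d :=
      finrank_euclideanSpace_fin
    omega
  have hSdir : Module.finrank ℝ S.direction = d - 1 := by
    rw [hS, direction_affineSpan]
    have hsub : AffineIndependent ℝ (Q ∘ (Subtype.val : {i : Fin (d+1) // i ≠ j} → Fin (d+1))) :=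
      hQ.comp_embedding (Function.Embedding.subtype _)
    have hcard : Fintype.card {i : Fin (d+1) // i ≠ j} = (d - 1) + 1 := by
      have : Fintype.card {i : Fin (d+1) // i ≠ j} = d := by
        simp [Fintype.card_subtype_compl]
      omega
    have := hsub.finrank_vectorSpan hcard
    have hrange : Set.range (Q ∘ (Subtype.val : {i : Fin (d+1) // i ≠ j} → Fin (d+1)))
        = Q '' {i | i ≠ j} := by
      rw [Set.range_comp, Subtype.range_coe_subtype]
    rwa [hrange] at this
  have hdir : S.direction = LinearMap.ker ℓ :=
    Submodule.eq_of_le_of_finrank_le hle (by rw [hrank, hSdir])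
  -- the foot point y
  set y : EuclideanSpace ℝ (Fin d) := Q j - (‖w‖ ^ 2)⁻¹ • w with hy
  have hℓQj : ℓ (Q j -ᵥ Q i0) = 1 := by
    have : ℓ (Q j -ᵥ Q i0) = b.coord j (Q j) -ᵥ b.coord j (Q i0) :=
      (b.coord j).linearMap_vsub _ _
    rw [this, hcoordQ i0 hi0]
    rw [← hbQ j, b.coord_apply_eq]
    simp
  have hyS : y ∈ S := by
    have hmem : y -ᵥ Q i0 ∈ S.direction := by
      rw [hdir, LinearMap.mem_ker]
      have hsplit : y -ᵥ Q i0 = (-((‖w‖ ^ 2)⁻¹ • w)) + (Q j -ᵥ Q i0) := by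
        simp only [hy, vsub_eq_sub]
        ring_nf
        abel
      rw [hsplit, map_add, map_neg, ℓ.map_smul, hℓQj]
      have : ℓ w = ‖w‖ ^ 2 := by
        have := hφw w
        rw [real_inner_self_eq_norm_sq] at this
        exact this.symm
      rw [this]
      rw [smul_eq_mul, inv_mul_cancel₀ (pow_ne_zero 2 hwpos.ne')]; ring
    have := AffineSubspace.vadd_mem_of_mem_direction hmem hQi0
    rwa [vsub_vadd] at this
  have hdist : dist (Q j) y = ‖w‖⁻¹ := by
    rw [dist_eq_norm, hy]
    have : Q j - (Q j - (‖w‖ ^ 2)⁻¹ • w) = (‖w‖ ^ 2)⁻¹ • w := by abel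
    rw [this, norm_smul]
    rw [norm_inv, norm_pow, norm_norm, sq]
    field_simp
  calc Metric.infDist (Q j) (S : Set (EuclideanSpace ℝ (Fin d))) * ‖φ‖
      ≤ dist (Q j) y * ‖φ‖ := by
        apply mul_le_mul_of_nonneg_right (Metric.infDist_le_dist_of_mem hyS) (norm_nonneg _)
    _ = 1 := by rw [hdist, ← hnw]; field_simp

private lemma stmt6_linear_apply (d : ℕ)
    (Q : Fin (d + 1) → EuclideanSpace ℝ (Fin d))
    (hQ : AffineIndependent ℝ Q) (hspan : affineSpan ℝ (Set.range Q) = ⊤)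
    (v : EuclideanSpace ℝ (Fin d) →ᵃ[ℝ] ℂ) (u : EuclideanSpace ℝ (Fin d)) :
    v.linear u = ∑ j, (((AffineBasis.mk Q hQ hspan).coord j).linear u) • v (Q j) := by
  classical
  set b : AffineBasis (Fin (d + 1)) ℝ (EuclideanSpace ℝ (Fin d)) := AffineBasis.mk Q hQ hspan
  have hbQ : ∀ i, b i = Q i := fun i => rfl
  have h1 : ∀ x, v x = ∑ j, (b.coord j x) • v (Q j) := by
    intro x
    conv_lhs => rw [← b.affineCombination_coord_eq_self x]
    rw [Finset.map_affineCombination _ _ _ (b.sum_coord_apply_eq_one x) v]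
    rw [Finset.affineCombination_eq_linear_combination _ _ _ (b.sum_coord_apply_eq_one x)]
    rfl
  set x0 : EuclideanSpace ℝ (Fin d) := Q 0
  have h2 : v (u +ᵥ x0) = v.linear u +ᵥ v x0 := v.map_vadd _ _
  have h3 : ∀ j, b.coord j (u +ᵥ x0) = (b.coord j).linear u + b.coord j x0 := by
    intro j
    have := (b.coord j).map_vadd x0 u
    rw [this]
    rfl
  have h4 : v.linear u = v (u +ᵥ x0) - v x0 := by
    rw [h2]; simp [vadd_eq_add]
  rw [h4, h1 (u +ᵥ x0), h1 x0, ← Finset.sum_sub_distrib]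
  congr 1
  ext j
  rw [h3 j, add_smul]
  ring

end Stmt6Aux

/-- inverse inequality on a non-degenerate `d`-simplex `K` (with minimum
height `κ`) for an affine function `v` with vertex values `v_j = v(Q_j)`:
`‖∇v‖_{L^r(K)} = |K|^{1/r}·|∇v| ≤ ((d+1)/κ)·(|K|/(d+1)·∑_j |v_j|^r)^{1/r}`. -/
theorem stmt6 (d : ℕ) (Q : Fin (d + 1) → EuclideanSpace ℝ (Fin d))
    (hQ : AffineIndependent ℝ Q) (hspan : affineSpan ℝ (Set.range Q) = ⊤)
    (r : ℝ) (hr : 1 ≤ r)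
    (v : EuclideanSpace ℝ (Fin d) →ᵃ[ℝ] ℂ)
    (κ : ℝ)
    (hκ : κ = ⨅ j, Metric.infDist (Q j)
        ((affineSpan ℝ (Q '' {i | i ≠ j}) : AffineSubspace ℝ (EuclideanSpace ℝ (Fin d)))
          : Set (EuclideanSpace ℝ (Fin d)))) :
    ((volume (convexHull ℝ (Set.range Q))).toReal) ^ (1 / r)
        * ‖LinearMap.toContinuousLinearMap v.linear‖
      ≤ (((d : ℝ) + 1) / κ)
        * ((volume (convexHull ℝ (Set.range Q))).toReal / ((d : ℝ) + 1)
            * ∑ j, ‖v (Q j)‖ ^ r) ^ (1 / r) := by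
  classical
  have hr0 : (0:ℝ) < r := lt_of_lt_of_le one_pos hr
  rcases Nat.eq_zero_or_pos d with hd0 | hd
  · -- degenerate case d = 0
    subst hd0
    have hL : LinearMap.toContinuousLinearMap v.linear = 0 := by
      ext x
      have hx : x = 0 := Subsingleton.elim _ _
      simp [hx]
    have hκ0 : κ = 0 := by
      rw [hκ]
      have h0 : ∀ j : Fin 1, ({i : Fin 1 | i ≠ j} : Set (Fin 1)) = ∅ := by
        intro j
        ext i
        simp [Subsingleton.elim i j]
      have : ∀ j : Fin 1, Metric.infDist (Q j)
          ((affineSpan ℝ (Q '' {i | i ≠ j}) : AffineSubspace ℝ (EuclideanSpace ℝ (Fin 0)))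
            : Set (EuclideanSpace ℝ (Fin 0))) = 0 := by
        intro j
        rw [h0 j]
        simp [Metric.infDist_empty]
      rw [iInf_congr this, ciInf_const]
    rw [hL, hκ0]
    simp
  -- main case 1 ≤ d
  set A : ℝ := (volume (convexHull ℝ (Set.range Q))).toReal with hA
  have hA0 : 0 ≤ A := ENNReal.toReal_nonneg
  set f : Fin (d + 1) → ℝ := fun j => Metric.infDist (Q j)
      ((affineSpan ℝ (Q '' {i | i ≠ j}) : AffineSubspace ℝ (EuclideanSpace ℝ (Fin d)))
        : Set (EuclideanSpace ℝ (Fin d))) with hf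
  -- each height is positive
  have hfpos : ∀ j, 0 < f j := by
    intro j
    have hclosed : IsClosed ((affineSpan ℝ (Q '' {i | i ≠ j}) :
        AffineSubspace ℝ (EuclideanSpace ℝ (Fin d))) : Set (EuclideanSpace ℝ (Fin d))) :=
      (affineSpan ℝ (Q '' {i | i ≠ j})).closed_of_finiteDimensional
    have hnontriv : Nontrivial (Fin (d + 1)) := by
      constructor
      refine ⟨⟨0, by omega⟩, ⟨1, by omega⟩, ?_⟩
      simp [Fin.ext_iff]
    obtain ⟨i0, hi0⟩ := @exists_ne _ hnontriv j
    have hne : ((affineSpan ℝ (Q '' {i | i ≠ j}) :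
        AffineSubspace ℝ (EuclideanSpace ℝ (Fin d))) : Set (EuclideanSpace ℝ (Fin d))).Nonempty :=
      ⟨Q i0, subset_affineSpan ℝ _ (Set.mem_image_of_mem Q hi0)⟩
    have hnotmem : Q j ∉ (affineSpan ℝ (Q '' {i | i ≠ j}) :
        AffineSubspace ℝ (EuclideanSpace ℝ (Fin d))) := by
      have := hQ.notMem_affineSpan_diff j Set.univ
      have heq : (Set.univ \ {j} : Set (Fin (d+1))) = {i | i ≠ j} := by
        ext i; simp
      rwa [heq] at this
    exact (hclosed.notMem_iff_infDist_pos hne).1 hnotmem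
  have hκle : ∀ j, κ ≤ f j := by
    intro j
    rw [hκ]
    exact ciInf_le (Set.finite_range f).bddBelow j
  have hκpos : 0 < κ := by
    rw [hκ]
    have hne : (Finset.univ : Finset (Fin (d+1))).Nonempty := Finset.univ_nonempty
    have hm : 0 < Finset.univ.inf' hne f := by
      rw [Finset.lt_inf'_iff]
      exact fun j _ => hfpos j
    refine lt_of_lt_of_le hm (le_ciInf fun j => Finset.inf'_le f (Finset.mem_univ j))
  -- operator norm bound
  set S1 : ℝ := ∑ j, ‖v (Q j)‖ with hS1
  have hS10 : 0 ≤ S1 := Finset.sum_nonneg fun j _ => norm_nonneg _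
  have hcoordle : ∀ j, ‖LinearMap.toContinuousLinearMap
      ((AffineBasis.mk Q hQ hspan).coord j).linear‖ ≤ κ⁻¹ := by
    intro j
    have h1 := stmt6_coord_bound d hd Q hQ hspan j
    have h2 : κ * ‖LinearMap.toContinuousLinearMap
        ((AffineBasis.mk Q hQ hspan).coord j).linear‖ ≤ 1 :=
      le_trans (mul_le_mul_of_nonneg_right (hκle j) (norm_nonneg _)) h1
    rw [← le_div_iff₀' hκpos] at h2
    simpa [one_div] using h2
  have hL : ‖LinearMap.toContinuousLinearMap v.linear‖ ≤ S1 / κ := by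
    apply ContinuousLinearMap.opNorm_le_bound _ (by positivity)
    intro u
    have hrepr : v.linear u = ∑ j, (((AffineBasis.mk Q hQ hspan).coord j).linear u) • v (Q j) :=
      stmt6_linear_apply d Q hQ hspan v u
    have : ‖LinearMap.toContinuousLinearMap v.linear u‖
        = ‖∑ j, (((AffineBasis.mk Q hQ hspan).coord j).linear u) • v (Q j)‖ := by
      rw [← hrepr]; rfl
    rw [this]
    calc ‖∑ j, (((AffineBasis.mk Q hQ hspan).coord j).linear u) • v (Q j)‖
        ≤ ∑ j, ‖(((AffineBasis.mk Q hQ hspan).coord j).linear u) • v (Q j)‖ :=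
          norm_sum_le _ _
      _ ≤ ∑ j, κ⁻¹ * ‖u‖ * ‖v (Q j)‖ := by
          apply Finset.sum_le_sum
          intro j _
          rw [norm_smul]
          apply mul_le_mul_of_nonneg_right _ (norm_nonneg _)
          calc ‖((AffineBasis.mk Q hQ hspan).coord j).linear u‖
              ≤ ‖LinearMap.toContinuousLinearMap
                  ((AffineBasis.mk Q hQ hspan).coord j).linear‖ * ‖u‖ :=
                (LinearMap.toContinuousLinearMap
                  ((AffineBasis.mk Q hQ hspan).coord j).linear).le_opNorm u
            _ ≤ κ⁻¹ * ‖u‖ := mul_le_mul_of_nonneg_right (hcoordle j) (norm_nonneg _)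
      _ = S1 / κ * ‖u‖ := by
          rw [← Finset.mul_sum, ← hS1]
          field_simp
          try ring
  -- Hölder / power mean inequality
  set n : ℝ := (d : ℝ) + 1 with hn
  have hnpos : (0:ℝ) < n := by positivity
  set Sr : ℝ := ∑ j, ‖v (Q j)‖ ^ r with hSr
  have hSr0 : 0 ≤ Sr := Finset.sum_nonneg fun j _ => Real.rpow_nonneg (norm_nonneg _) r
  have hmean : S1 / n ≤ (Sr / n) ^ (1 / r) := by
    have := Real.arith_mean_le_rpow_mean Finset.univ (fun _ => n⁻¹) (fun j => ‖v (Q j)‖)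
      (fun _ _ => by positivity)
      (by simp [Finset.card_univ]; field_simp; exact hn.symm)
      (fun j _ => norm_nonneg _) hr
    calc S1 / n = ∑ j, n⁻¹ * ‖v (Q j)‖ := by
          rw [← Finset.mul_sum, hS1]; ring
      _ ≤ (∑ j, n⁻¹ * ‖v (Q j)‖ ^ r) ^ (1 / r) := this
      _ = (Sr / n) ^ (1 / r) := by
          rw [← Finset.mul_sum, hSr]
          congr 1
          ring
  have hHolder : S1 ≤ n * (Sr / n) ^ (1 / r) := by
    have := mul_le_mul_of_nonneg_left hmean (le_of_lt hnpos)
    calc S1 = n * (S1 / n) := by field_simp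
      _ ≤ n * (Sr / n) ^ (1 / r) := this
  -- put everything together
  have hRHS : (n / κ) * (A / n * Sr) ^ (1 / r)
      = A ^ (1 / r) * ((n * (Sr / n) ^ (1 / r)) / κ) := by
    have h1 : A / n * Sr = A * (Sr / n) := by ring
    rw [h1, Real.mul_rpow hA0 (by positivity)]
    ring
  rw [hRHS]
  apply mul_le_mul_of_nonneg_left _ (Real.rpow_nonneg hA0 _)
  calc ‖LinearMap.toContinuousLinearMap v.linear‖ ≤ S1 / κ := hL
    _ ≤ (n * (Sr / n) ^ (1 / r)) / κ := by
        gcongr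
end

section
/- Let X be a Banach space with norm ‖·‖, let A be a bounded invertible operator on X, p ∈ (1,∞), τ > 0, and q ∈ (1,∞). For a sequence v = (v^n)_{n≥0} in X define the K-functional K(t,w) = inf{‖a‖ + t‖Ab‖ : w = a + b} relative to the pair (X, D(A)) where D(A) has norm ‖A·‖. Then there exists C > 0 depending only on p such that ‖v¹‖_{1−1/p,p} ≤ C(‖Av_1‖_{l^p_τ} + ‖D_τ v‖_{l^p_τ}), where ‖w‖_{1−1/p,p}^p = ∫_0^∞ |t^{−1+1/p}K(t,w)|^p dt/t, v_1 = (v^{n+1})_n, D_τ v = ((v^{n+1}−v^n)/τ)_n, and ‖u‖_{l^p_τ}^p = ∑_n ‖u^n‖^p τ. -/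
open MeasureTheory Set

open Finset in
/-- Discrete Hardy inequality (finite version). -/
lemma hardy_aux {p : ℝ} (hp : 1 < p) (a : ℕ → ℝ) (ha : ∀ j, 0 ≤ a j) (N : ℕ) :
    ∑ n ∈ range N, ((∑ j ∈ range (n + 1), a j) / (n + 1 : ℝ)) ^ p
      ≤ (p / (p - 1)) ^ p * ∑ j ∈ range N, a j ^ p := by
  have hp0 : (0 : ℝ) < p := lt_trans one_pos hp
  have hp1 : (0 : ℝ) < p - 1 := by linarith
  set q : ℝ := p / (p - 1) with hq_def
  have hq0 : 0 < q := div_pos hp0 hp1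
  have hpq : p.HolderConjugate q := Real.HolderConjugate.conjExponent hp
  set T : ℕ → ℝ := fun n => ∑ j ∈ range n, a j with hT_def
  have hT0 : ∀ n, 0 ≤ T n := fun n => Finset.sum_nonneg fun j _ => ha j
  set Av : ℕ → ℝ := fun n => T (n + 1) / (n + 1 : ℝ) with hAv_def
  have hAv0 : ∀ n, 0 ≤ Av n := fun n => div_nonneg (hT0 _) (by positivity)
  set g : ℕ → ℝ := fun n => (n : ℝ) * (T n / n) ^ p with hg_def
  -- key pointwise estimate
  have key : ∀ n, Av n ^ p ≤ q * (a n * Av n ^ (p - 1)) + (1 / (p - 1)) * (g n - g (n + 1)) := by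
    intro n
    set x : ℝ := T n / n with hx_def
    set y : ℝ := Av n with hy_def
    have hx : 0 ≤ x := div_nonneg (hT0 _) (Nat.cast_nonneg n)
    have hy : 0 ≤ y := hAv0 n
    have hnx : (n : ℝ) * x = T n := by
      rcases Nat.eq_zero_or_pos n with h | h
      · subst h; simp [hT_def]
      · have : (n : ℝ) ≠ 0 := Nat.cast_ne_zero.mpr h.ne'
        rw [hx_def]
        field_simp
    have hny : ((n : ℝ) + 1) * y = T (n + 1) := by
      have : ((n : ℝ) + 1) ≠ 0 := by positivity
      simp only [hy_def, hAv_def]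
      field_simp
    have hTs : T (n + 1) = T n + a n := Finset.sum_range_succ a n
    have han : a n = ((n : ℝ) + 1) * y - (n : ℝ) * x := by
      rw [hny, hnx, hTs]; ring
    have hgn : g n = (n : ℝ) * x ^ p := rfl
    have hgn1 : g (n + 1) = ((n : ℝ) + 1) * y ^ p := by
      simp only [hg_def, hy_def, hAv_def, Nat.cast_add, Nat.cast_one]
    rcases eq_or_lt_of_le hy with hy0 | hy0
    · -- y = 0 case
      have hy0 : y = 0 := hy0.symm
      have hTn1 : T (n + 1) = 0 := by
        have := hny; rw [hy0, mul_zero] at this; exact this.symm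
      have hTn : T n = 0 := by have := ha n; have := hT0 n; linarith
      have hxz : x = 0 := by rw [hx_def, hTn, zero_div]
      have han0 : a n = 0 := by linarith
      simp only [hy0, hgn, hgn1, hxz, han0, Real.zero_rpow hp0.ne']
      simp
    · -- y > 0 case
      have hZ : y ^ (p - 1) * y = y ^ p := by
        rw [← Real.rpow_add_one hy0.ne' (p - 1)]
        norm_num
      have hyq : (y ^ (p - 1)) ^ q = y ^ p := by
        rw [← Real.rpow_mul hy]
        congr 1
        rw [hq_def]
        field_simp
      have young : x * y ^ (p - 1) ≤ x ^ p / p + y ^ p / q := by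
        have h := Real.young_inequality_of_nonneg hx (Real.rpow_nonneg hy (p - 1)) hpq
        rwa [hyq] at h
      have hqp : q / p = 1 / (p - 1) := by rw [hq_def]; field_simp
      -- scaled Young
      have young' : q * (n : ℝ) * (x * y ^ (p - 1)) ≤ q * (n : ℝ) * (x ^ p / p + y ^ p / q) :=
        mul_le_mul_of_nonneg_left young (by positivity)
      have expand : q * (a n * y ^ (p - 1))
          = q * ((n : ℝ) + 1) * (y ^ (p - 1) * y) - q * (n : ℝ) * (x * y ^ (p - 1)) := by
        rw [han]; ring
      have final : q * ((n : ℝ) + 1) * (y ^ p) - q * (n : ℝ) * (x ^ p / p + y ^ p / q)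
          + (1 / (p - 1)) * ((n : ℝ) * x ^ p - ((n : ℝ) + 1) * y ^ p) = y ^ p := by
        rw [hq_def]
        field_simp
        ring
      rw [hgn, hgn1]
      rw [expand, hZ] at *
      linarith
  -- sum the key estimate
  have sum_key : ∑ n ∈ range N, Av n ^ p
      ≤ q * ∑ n ∈ range N, a n * Av n ^ (p - 1) := by
    have htele : ∑ n ∈ range N, (g n - g (n + 1)) = g 0 - g N := Finset.sum_range_sub' g N
    have hgN : 0 ≤ g N :=
      mul_nonneg (Nat.cast_nonneg N)
        (Real.rpow_nonneg (div_nonneg (hT0 N) (Nat.cast_nonneg N)) p)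
    have hg0 : g 0 = 0 := by simp [hg_def]
    have h1 : ∑ n ∈ range N, Av n ^ p
        ≤ ∑ n ∈ range N, (q * (a n * Av n ^ (p - 1)) + (1 / (p - 1)) * (g n - g (n + 1))) :=
      Finset.sum_le_sum fun n _ => key n
    have h2 : ∑ n ∈ range N, (q * (a n * Av n ^ (p - 1)) + (1 / (p - 1)) * (g n - g (n + 1)))
        = q * ∑ n ∈ range N, a n * Av n ^ (p - 1) + (1 / (p - 1)) * (g 0 - g N) := by
      rw [Finset.sum_add_distrib, ← Finset.mul_sum, ← Finset.mul_sum, htele]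
    have h3 : (1 / (p - 1)) * (g 0 - g N) ≤ 0 := by
      rw [hg0]
      have : 0 < 1 / (p - 1) := by positivity
      nlinarith
    calc ∑ n ∈ range N, Av n ^ p ≤ _ := h1
      _ = _ := h2
      _ ≤ q * ∑ n ∈ range N, a n * Av n ^ (p - 1) := by linarith
  set S : ℝ := ∑ n ∈ range N, Av n ^ p with hS_def
  set B : ℝ := ∑ j ∈ range N, a j ^ p with hB_def
  have hS0 : 0 ≤ S := Finset.sum_nonneg fun n _ => Real.rpow_nonneg (hAv0 n) p
  have hB0 : 0 ≤ B := Finset.sum_nonneg fun n _ => Real.rpow_nonneg (ha n) p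
  have holder : ∑ n ∈ range N, a n * Av n ^ (p - 1) ≤ B ^ (1 / p) * S ^ (1 / q) := by
    have h := Real.inner_le_Lp_mul_Lq_of_nonneg (s := range N) (f := a)
      (g := fun n => Av n ^ (p - 1)) hpq (fun i _ => ha i)
      (fun i _ => Real.rpow_nonneg (hAv0 i) _)
    have hrw : ∀ i : ℕ, (Av i ^ (p - 1)) ^ q = Av i ^ p := by
      intro i
      rw [← Real.rpow_mul (hAv0 i)]
      congr 1
      rw [hq_def]
      field_simp
    simp only [hrw] at h
    exact h
  have hfinal : S ≤ q ^ p * B := by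
    rcases eq_or_lt_of_le hS0 with h0 | hSpos
    · rw [← h0]; positivity
    · have h1 : S ≤ q * (B ^ (1 / p) * S ^ (1 / q)) :=
        le_trans sum_key (mul_le_mul_of_nonneg_left holder hq0.le)
      have hSq : 0 < S ^ (1 / q) := Real.rpow_pos_of_pos hSpos _
      have hsplit : S = S ^ (1 / p) * S ^ (1 / q) := by
        rw [← Real.rpow_add hSpos]
        have : 1 / p + 1 / q = 1 := by
          rw [one_div, one_div]; exact hpq.inv_add_inv_eq_one
        rw [this, Real.rpow_one]
      have h2 : S ^ (1 / p) ≤ q * B ^ (1 / p) := by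
        have h1' : S ^ (1 / p) * S ^ (1 / q) ≤ q * B ^ (1 / p) * S ^ (1 / q) := by
          rw [← hsplit]; linarith [h1]
        exact le_of_mul_le_mul_right h1' hSq
      have h3 : (S ^ (1 / p)) ^ p ≤ (q * B ^ (1 / p)) ^ p :=
        Real.rpow_le_rpow (Real.rpow_nonneg hS0 _) h2 hp0.le
      have e1 : (S ^ (1 / p)) ^ p = S := by
        rw [← Real.rpow_mul hS0, one_div, inv_mul_cancel₀ hp0.ne', Real.rpow_one]
      have e2 : (q * B ^ (1 / p)) ^ p = q ^ p * B := by
        rw [Real.mul_rpow hq0.le (Real.rpow_nonneg hB0 _), ← Real.rpow_mul hB0,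
          one_div, inv_mul_cancel₀ hp0.ne', Real.rpow_one]
      rw [e1, e2] at h3
      exact h3
  exact hfinal

lemma two_rpow_bound {x y p : ℝ} (hx : 0 ≤ x) (hy : 0 ≤ y) (hp : 0 ≤ p) :
    (x + y) ^ p ≤ 2 ^ p * (x ^ p + y ^ p) := by
  have h1 : x + y ≤ 2 * max x y := by
    rcases le_total x y with h | h
    · rw [max_eq_right h]; linarith
    · rw [max_eq_left h]; linarith
  have h2 : (x + y) ^ p ≤ (2 * max x y) ^ p :=
    Real.rpow_le_rpow (by positivity) h1 hp
  have h3 : (2 * max x y) ^ p = 2 ^ p * (max x y) ^ p :=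
    Real.mul_rpow (by norm_num) (le_max_iff.mpr (Or.inl hx))
  have h4 : (max x y) ^ p ≤ x ^ p + y ^ p := by
    rcases le_total x y with h | h
    · rw [max_eq_right h]
      have : 0 ≤ x ^ p := Real.rpow_nonneg hx p
      linarith
    · rw [max_eq_left h]
      have : 0 ≤ y ^ p := Real.rpow_nonneg hy p
      linarith
  calc (x + y) ^ p ≤ 2 ^ p * (max x y) ^ p := h3 ▸ h2
    _ ≤ 2 ^ p * (x ^ p + y ^ p) := by
        have : (0:ℝ) ≤ 2 ^ p := Real.rpow_nonneg (by norm_num) p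
        nlinarith

lemma rpow_add_le_add_rpow' {x y z : ℝ} (hx : 0 ≤ x) (hy : 0 ≤ y) (hz : 0 ≤ z) (hz1 : z ≤ 1) :
    (x + y) ^ z ≤ x ^ z + y ^ z := by
  lift x to NNReal using hx
  lift y to NNReal using hy
  rw [← NNReal.coe_add, ← NNReal.coe_rpow, ← NNReal.coe_rpow, ← NNReal.coe_rpow,
    ← NNReal.coe_add, NNReal.coe_le_coe]
  exact NNReal.rpow_add_le_add_rpow x y hz hz1


/-- discrete trace theorem. For a bounded invertible operator `A` on a Banach
space `X`, with `K(t,w) = inf{‖a‖ + t‖Ab‖ : w = a + b}` the K-functional of the pair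
`(X, D(A))` and `‖w‖_{1−1/p,p}^p = ∫_0^∞ (t^{−1+1/p}K(t,w))^p dt/t`, there exists `C > 0`
depending only on `p` such that
`‖v¹‖_{1−1/p,p} ≤ C(‖Av_1‖_{l^p_τ} + ‖D_τ v‖_{l^p_τ})`, uniformly in `τ`. -/
theorem stmt12 (p : ℝ) (hp : 1 < p) (q : ℝ) (hq : 1 < q) :
    ∃ C > 0, ∀ (X : Type) [NormedAddCommGroup X] [NormedSpace ℝ X] [CompleteSpace X],
      ∀ (A Ainv : X →L[ℝ] X),
        A.comp Ainv = ContinuousLinearMap.id ℝ X →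
        Ainv.comp A = ContinuousLinearMap.id ℝ X →
      ∀ (τ : ℝ), 0 < τ → ∀ v : ℕ → X,
        Summable (fun n => ‖A (v (n + 1))‖ ^ p) →
        Summable (fun n => ‖τ⁻¹ • (v (n + 1) - v n)‖ ^ p) →
        (∫⁻ t in Ioi (0 : ℝ), ENNReal.ofReal
            ((t ^ (-1 + 1 / p) *
              sInf {c : ℝ | ∃ a b : X, v 1 = a + b ∧ c = ‖a‖ + t * ‖A b‖}) ^ p / t))
            ^ (1 / p)
          ≤ ENNReal.ofReal (C *
              ((∑' n, ‖A (v (n + 1))‖ ^ p * τ) ^ (1 / p)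
                + (∑' n, ‖τ⁻¹ • (v (n + 1) - v n)‖ ^ p * τ) ^ (1 / p))) := by
  have hp0 : (0 : ℝ) < p := lt_trans one_pos hp
  have hp1 : (0 : ℝ) < p - 1 := by linarith
  set Cq : ℝ := (p / (p - 1)) ^ p with hCq_def
  have hCq : 0 < Cq := Real.rpow_pos_of_pos (div_pos hp0 hp1) p
  set M : ℝ := 2 ^ p * (Cq + 1) with hM_def
  have h2p : (0:ℝ) < 2 ^ p := Real.rpow_pos_of_pos (by norm_num) p
  have hM : 0 < M := by positivity
  refine ⟨M ^ (1 / p), Real.rpow_pos_of_pos hM _, ?_⟩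
  intro X _ _ _ A Ainv _ _ τ hτ v h1 h2
  -- abbreviations
  set Bn : ℕ → ℝ := fun n => ‖A (v (n + 1))‖ with hBn_def
  set Dn : ℕ → ℝ := fun n => ‖τ⁻¹ • (v (n + 1) - v n)‖ with hDn_def
  have hBn0 : ∀ n, 0 ≤ Bn n := fun n => norm_nonneg _
  have hDn0 : ∀ n, 0 ≤ Dn n := fun n => norm_nonneg _
  set S : ℕ → ℝ := fun n => ∑ j ∈ Finset.range n, ‖v (j + 2) - v (j + 1)‖ with hS_def
  have hS0 : ∀ n, 0 ≤ S n := fun n => Finset.sum_nonneg fun j _ => norm_nonneg _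
  set c : ℕ → ℝ := fun n => 2 ^ p * (((n : ℝ) * τ) ^ (-p) * S n ^ p + Bn n ^ p) with hc_def
  have hc0 : ∀ n, 0 ≤ c n := by
    intro n
    apply mul_nonneg h2p.le
    apply add_nonneg
    · exact mul_nonneg (Real.rpow_nonneg (by positivity) _) (Real.rpow_nonneg (hS0 n) _)
    · exact Real.rpow_nonneg (hBn0 n) _
  -- the K functional
  set K : ℝ → ℝ := fun t => sInf {c : ℝ | ∃ a b : X, v 1 = a + b ∧ c = ‖a‖ + t * ‖A b‖}
    with hK_def
  have hKset : ∀ t : ℝ, 0 ≤ t → ∀ n : ℕ, K t ≤ S n + t * Bn n := by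
    intro t ht n
    have hbdd : BddBelow {c : ℝ | ∃ a b : X, v 1 = a + b ∧ c = ‖a‖ + t * ‖A b‖} := by
      refine ⟨0, fun x hx => ?_⟩
      obtain ⟨a, b, -, rfl⟩ := hx
      have : 0 ≤ t * ‖A b‖ := mul_nonneg ht (norm_nonneg _)
      have := norm_nonneg a
      linarith
    have hmem : ‖v 1 - v (n + 1)‖ + t * ‖A (v (n + 1))‖ ∈
        {c : ℝ | ∃ a b : X, v 1 = a + b ∧ c = ‖a‖ + t * ‖A b‖} :=
      ⟨v 1 - v (n + 1), v (n + 1), by abel, rfl⟩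
    have hle := csInf_le hbdd hmem
    have htel : v (n + 1) - v 1 = ∑ j ∈ Finset.range n, (v (j + 2) - v (j + 1)) := by
      have h := Finset.sum_range_sub (fun j => v (j + 1)) n
      simpa using h.symm
    have hnorm : ‖v 1 - v (n + 1)‖ ≤ S n := by
      rw [norm_sub_rev, htel]
      exact norm_sum_le _ _
    calc K t ≤ ‖v 1 - v (n + 1)‖ + t * ‖A (v (n + 1))‖ := hle
      _ ≤ S n + t * Bn n := by
          have : t * ‖A (v (n + 1))‖ = t * Bn n := rfl
          linarith [hnorm]
  have hK0 : ∀ t : ℝ, 0 ≤ t → 0 ≤ K t := by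
    intro t ht
    apply Real.sInf_nonneg
    rintro x ⟨a, b, -, rfl⟩
    have : 0 ≤ t * ‖A b‖ := mul_nonneg ht (norm_nonneg _)
    have := norm_nonneg a
    linarith
  -- pointwise estimate on each interval
  have hpoint : ∀ n : ℕ, ∀ t ∈ Ioc ((n : ℝ) * τ) (((n : ℝ) + 1) * τ),
      (t ^ (-1 + 1 / p) * K t) ^ p / t ≤ c n := by
    intro n t ht
    have htn : (0:ℝ) ≤ (n : ℝ) * τ := by positivity
    have ht0 : 0 < t := lt_of_le_of_lt htn ht.1
    have hKt0 : 0 ≤ K t := hK0 t ht0.le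
    have hKtb : K t ≤ S n + t * Bn n := hKset t ht0.le n
    -- rewrite the left side as t^(-p) * K t ^ p
    have hrw : (t ^ (-1 + 1 / p) * K t) ^ p / t = t ^ (-p) * K t ^ p := by
      rw [Real.mul_rpow (Real.rpow_nonneg ht0.le _) hKt0, ← Real.rpow_mul ht0.le]
      have he : (-1 + 1 / p) * p = -p + 1 := by field_simp
      rw [he, Real.rpow_add ht0, Real.rpow_one]
      field_simp
    rw [hrw]
    -- bound K t ^ p
    have hKp : K t ^ p ≤ 2 ^ p * (S n ^ p + t ^ p * Bn n ^ p) := by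
      calc K t ^ p ≤ (S n + t * Bn n) ^ p := Real.rpow_le_rpow hKt0 hKtb hp0.le
        _ ≤ 2 ^ p * (S n ^ p + (t * Bn n) ^ p) :=
            two_rpow_bound (hS0 n) (mul_nonneg ht0.le (hBn0 n)) hp0.le
        _ = 2 ^ p * (S n ^ p + t ^ p * Bn n ^ p) := by
            rw [Real.mul_rpow ht0.le (hBn0 n)]
    have htp : (0:ℝ) ≤ t ^ (-p) := Real.rpow_nonneg ht0.le _
    have hcancel : t ^ (-p) * t ^ p = 1 := by
      rw [← Real.rpow_add ht0, neg_add_cancel, Real.rpow_zero]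
    have hmono : t ^ (-p) * S n ^ p ≤ ((n : ℝ) * τ) ^ (-p) * S n ^ p := by
      rcases Nat.eq_zero_or_pos n with h | h
      · subst h
        simp only [hS_def, Finset.range_zero, Finset.sum_empty, Nat.cast_zero]
        rw [Real.zero_rpow hp0.ne', mul_zero, mul_zero]
      · have hnτ : 0 < (n : ℝ) * τ := by
          have : (0:ℝ) < (n:ℝ) := Nat.cast_pos.mpr h
          positivity
        have := Real.rpow_le_rpow_of_nonpos hnτ ht.1.le (neg_nonpos_of_nonneg hp0.le)
        exact mul_le_mul_of_nonneg_right this (Real.rpow_nonneg (hS0 n) p)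
    calc t ^ (-p) * K t ^ p ≤ t ^ (-p) * (2 ^ p * (S n ^ p + t ^ p * Bn n ^ p)) :=
          mul_le_mul_of_nonneg_left hKp htp
      _ = 2 ^ p * (t ^ (-p) * S n ^ p + (t ^ (-p) * t ^ p) * Bn n ^ p) := by ring
      _ = 2 ^ p * (t ^ (-p) * S n ^ p + Bn n ^ p) := by rw [hcancel, one_mul]
      _ ≤ c n := by
          show _ ≤ 2 ^ p * (((n : ℝ) * τ) ^ (-p) * S n ^ p + Bn n ^ p)
          exact mul_le_mul_of_nonneg_left (by linarith [hmono]) h2p.le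
  -- integral over each interval
  have hIoc : ∀ n : ℕ,
      (∫⁻ t in Ioc ((n : ℝ) * τ) (((n : ℝ) + 1) * τ), ENNReal.ofReal
          ((t ^ (-1 + 1 / p) *
            sInf {c : ℝ | ∃ a b : X, v 1 = a + b ∧ c = ‖a‖ + t * ‖A b‖}) ^ p / t))
        ≤ ENNReal.ofReal (c n * τ) := by
    intro n
    have hb : ∀ t ∈ Ioc ((n : ℝ) * τ) (((n : ℝ) + 1) * τ),
        ENNReal.ofReal ((t ^ (-1 + 1 / p) *
            sInf {c : ℝ | ∃ a b : X, v 1 = a + b ∧ c = ‖a‖ + t * ‖A b‖}) ^ p / t)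
          ≤ ENNReal.ofReal (c n) := fun t ht =>
      ENNReal.ofReal_le_ofReal (hpoint n t ht)
    calc (∫⁻ t in Ioc ((n : ℝ) * τ) (((n : ℝ) + 1) * τ), ENNReal.ofReal
            ((t ^ (-1 + 1 / p) *
              sInf {c : ℝ | ∃ a b : X, v 1 = a + b ∧ c = ‖a‖ + t * ‖A b‖}) ^ p / t))
        ≤ ∫⁻ _ in Ioc ((n : ℝ) * τ) (((n : ℝ) + 1) * τ), ENNReal.ofReal (c n) :=
          setLIntegral_mono measurable_const hb
      _ = ENNReal.ofReal (c n) * volume (Ioc ((n : ℝ) * τ) (((n : ℝ) + 1) * τ)) :=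
          setLIntegral_const _ _
      _ = ENNReal.ofReal (c n) * ENNReal.ofReal τ := by
          rw [Real.volume_Ioc]
          congr 1
          ring
      _ = ENNReal.ofReal (c n * τ) := (ENNReal.ofReal_mul (hc0 n)).symm
  -- covering of (0,∞)
  have hcover : Ioi (0 : ℝ) ⊆ ⋃ n : ℕ, Ioc ((n : ℝ) * τ) (((n : ℝ) + 1) * τ) := by
    intro t ht
    have ht0 : 0 < t := ht
    have htτ : 0 < t / τ := div_pos ht0 hτ
    set m : ℕ := ⌈t / τ⌉₊ with hm_def
    have hm1 : 1 ≤ m := Nat.one_le_iff_ne_zero.mpr (by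
      intro h
      have := Nat.ceil_eq_zero.mp h
      linarith)
    refine mem_iUnion.mpr ⟨m - 1, ?_⟩
    have hcast : ((m - 1 : ℕ) : ℝ) = (m : ℝ) - 1 := by
      rw [Nat.cast_sub hm1]; simp
    constructor
    · rw [hcast]
      have h1 : (m : ℝ) < t / τ + 1 := Nat.ceil_lt_add_one htτ.le
      have h2 : (m : ℝ) - 1 < t / τ := by linarith
      calc ((m : ℝ) - 1) * τ < t / τ * τ := by
            exact mul_lt_mul_of_pos_right h2 hτ
        _ = t := by field_simp
    · rw [hcast]
      have h1 : t / τ ≤ (m : ℝ) := Nat.le_ceil _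
      have : t ≤ (m : ℝ) * τ := by
        calc t = t / τ * τ := by field_simp
          _ ≤ (m : ℝ) * τ := mul_le_mul_of_nonneg_right h1 hτ.le
      calc t ≤ (m : ℝ) * τ := this
        _ = ((m : ℝ) - 1 + 1) * τ := by ring
  -- assemble the integral bound
  have hInt : (∫⁻ t in Ioi (0 : ℝ), ENNReal.ofReal
        ((t ^ (-1 + 1 / p) *
          sInf {c : ℝ | ∃ a b : X, v 1 = a + b ∧ c = ‖a‖ + t * ‖A b‖}) ^ p / t))
      ≤ ∑' n : ℕ, ENNReal.ofReal (c n * τ) := by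
    calc (∫⁻ t in Ioi (0 : ℝ), ENNReal.ofReal
          ((t ^ (-1 + 1 / p) *
            sInf {c : ℝ | ∃ a b : X, v 1 = a + b ∧ c = ‖a‖ + t * ‖A b‖}) ^ p / t))
        ≤ ∫⁻ t in ⋃ n : ℕ, Ioc ((n : ℝ) * τ) (((n : ℝ) + 1) * τ), ENNReal.ofReal
            ((t ^ (-1 + 1 / p) *
              sInf {c : ℝ | ∃ a b : X, v 1 = a + b ∧ c = ‖a‖ + t * ‖A b‖}) ^ p / t) :=
          lintegral_mono_set hcover
      _ ≤ ∑' n : ℕ, ∫⁻ t in Ioc ((n : ℝ) * τ) (((n : ℝ) + 1) * τ), ENNReal.ofReal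
            ((t ^ (-1 + 1 / p) *
              sInf {c : ℝ | ∃ a b : X, v 1 = a + b ∧ c = ‖a‖ + t * ‖A b‖}) ^ p / t) :=
          lintegral_iUnion_le _ _
      _ ≤ ∑' n : ℕ, ENNReal.ofReal (c n * τ) := ENNReal.tsum_le_tsum hIoc
  -- real-number estimates
  have hnormd : ∀ j : ℕ, ‖v (j + 2) - v (j + 1)‖ = τ * Dn (j + 1) := by
    intro j
    have : Dn (j + 1) = ‖τ⁻¹ • (v (j + 2) - v (j + 1))‖ := rfl
    rw [this, norm_smul, Real.norm_eq_abs, abs_of_pos (inv_pos.mpr hτ)]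
    field_simp
  set w : ℕ → ℝ := fun n => ((n : ℝ)) ^ (-p) * (∑ j ∈ Finset.range n, Dn (j + 1)) ^ p
    with hw_def
  have hw0 : ∀ n, 0 ≤ w n := fun n =>
    mul_nonneg (Real.rpow_nonneg (Nat.cast_nonneg n) _)
      (Real.rpow_nonneg (Finset.sum_nonneg fun j _ => hDn0 _) _)
  have hw_eq : ∀ n : ℕ, ((n : ℝ) * τ) ^ (-p) * S n ^ p = w n := by
    intro n
    have hSn : S n = τ * ∑ j ∈ Finset.range n, Dn (j + 1) := by
      rw [hS_def]
      simp only
      rw [Finset.mul_sum]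
      exact Finset.sum_congr rfl fun j _ => hnormd j
    have h1 : ((n : ℝ) * τ) ^ (-p) = (n : ℝ) ^ (-p) * τ ^ (-p) :=
      Real.mul_rpow (Nat.cast_nonneg n) hτ.le
    have h2 : S n ^ p = τ ^ p * (∑ j ∈ Finset.range n, Dn (j + 1)) ^ p := by
      rw [hSn, Real.mul_rpow hτ.le (Finset.sum_nonneg fun j _ => hDn0 _)]
    have h3 : τ ^ (-p) * τ ^ p = 1 := by
      rw [← Real.rpow_add hτ, neg_add_cancel, Real.rpow_zero]
    rw [h1, h2, hw_def]
    simp only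
    linear_combination ((n : ℝ) ^ (-p) * (∑ j ∈ Finset.range n, Dn (j + 1)) ^ p) * h3
  -- Hardy bound for partial sums of w
  have hsum' : Summable (fun j => Dn (j + 1) ^ p) := by
    have : Summable (fun j => Dn j ^ p) := h2
    exact (summable_nat_add_iff 1).mpr this
  set Ta : ℝ := ∑' j : ℕ, Dn (j + 1) ^ p with hTa_def
  have hTa0 : 0 ≤ Ta := tsum_nonneg fun j => Real.rpow_nonneg (hDn0 _) _
  have hw_partial : ∀ N : ℕ, ∑ n ∈ Finset.range N, w n ≤ Cq * Ta := by
    intro N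
    rcases Nat.eq_zero_or_pos N with h | h
    · subst h; simp [mul_nonneg hCq.le hTa0]
    · obtain ⟨Mn, rfl⟩ := Nat.exists_eq_add_of_lt h
      rw [zero_add]
      rw [Finset.sum_range_succ']
      have hw00 : w 0 = 0 := by
        rw [hw_def]
        simp only [Nat.cast_zero, Finset.range_zero, Finset.sum_empty]
        rw [Real.zero_rpow (by linarith : -p ≠ 0), zero_mul]
      rw [hw00, add_zero]
      have hconv : ∀ m : ℕ, w (m + 1)
          = ((∑ j ∈ Finset.range (m + 1), Dn (j + 1)) / ((m : ℝ) + 1)) ^ p := by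
        intro m
        have hm1 : (0:ℝ) < (m : ℝ) + 1 := by positivity
        rw [hw_def]
        simp only [Nat.cast_add, Nat.cast_one]
        rw [Real.div_rpow (Finset.sum_nonneg fun j _ => hDn0 _) hm1.le,
          Real.rpow_neg hm1.le, div_eq_mul_inv, mul_comm]
      calc ∑ m ∈ Finset.range Mn, w (m + 1)
          = ∑ m ∈ Finset.range Mn, ((∑ j ∈ Finset.range (m + 1), Dn (j + 1)) / ((m : ℝ) + 1)) ^ p :=
            Finset.sum_congr rfl fun m _ => hconv m
        _ ≤ Cq * ∑ j ∈ Finset.range Mn, Dn (j + 1) ^ p :=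
            hardy_aux hp (fun j => Dn (j + 1)) (fun j => hDn0 _) Mn
        _ ≤ Cq * Ta := by
            apply mul_le_mul_of_nonneg_left _ hCq.le
            exact Summable.sum_le_tsum _ (fun j _ => Real.rpow_nonneg (hDn0 _) _) hsum'
  have hw_summable : Summable w := summable_of_sum_range_le hw0 hw_partial
  have hw_tsum : ∑' n, w n ≤ Cq * Ta := Real.tsum_le_of_sum_range_le hw0 hw_partial
  -- sum up the real series
  have hc_fun : ∀ n, c n * τ = 2 ^ p * τ * w n + 2 ^ p * τ * Bn n ^ p := by
    intro n
    have h := hw_eq n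
    calc c n * τ = 2 ^ p * (((n : ℝ) * τ) ^ (-p) * S n ^ p + Bn n ^ p) * τ := rfl
      _ = 2 ^ p * (w n + Bn n ^ p) * τ := by rw [h]
      _ = 2 ^ p * τ * w n + 2 ^ p * τ * Bn n ^ p := by ring
  have hBsum : Summable (fun n => Bn n ^ p) := h1
  have hDsum : Summable (fun n => Dn n ^ p) := h2
  have hsummable1 : Summable (fun n => 2 ^ p * τ * w n) := hw_summable.mul_left _
  have hsummable2 : Summable (fun n => 2 ^ p * τ * Bn n ^ p) := hBsum.mul_left _
  have hc_summable : Summable (fun n => c n * τ) :=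
    (hsummable1.add hsummable2).congr fun n => (hc_fun n).symm
  have hcτ0 : ∀ n, 0 ≤ c n * τ := fun n => mul_nonneg (hc0 n) hτ.le
  set Sig1 : ℝ := ∑' n : ℕ, Bn n ^ p * τ with hSig1_def
  set Sig2 : ℝ := ∑' n : ℕ, Dn n ^ p * τ with hSig2_def
  have hSig1' : Summable (fun n => Bn n ^ p * τ) := hBsum.mul_right τ
  have hSig2' : Summable (fun n => Dn n ^ p * τ) := hDsum.mul_right τ
  have hSig10 : 0 ≤ Sig1 := tsum_nonneg fun n => mul_nonneg (Real.rpow_nonneg (hBn0 n) _) hτ.le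
  have hSig20 : 0 ≤ Sig2 := tsum_nonneg fun n => mul_nonneg (Real.rpow_nonneg (hDn0 n) _) hτ.le
  have hτTa : τ * Ta ≤ Sig2 := by
    have e : τ * Ta = ∑' j : ℕ, Dn (j + 1) ^ p * τ := by
      rw [hTa_def, ← tsum_mul_left]
      exact tsum_congr fun j => by ring
    have e2 : Sig2 = Dn 0 ^ p * τ + ∑' j : ℕ, Dn (j + 1) ^ p * τ := Summable.tsum_eq_zero_add hSig2'
    have e3 : 0 ≤ Dn 0 ^ p * τ := mul_nonneg (Real.rpow_nonneg (hDn0 0) _) hτ.le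
    rw [e, e2]
    linarith
  have htsum_c : ∑' n, c n * τ ≤ M * (Sig1 + Sig2) := by
    have e : ∑' n, c n * τ
        = 2 ^ p * τ * (∑' n, w n) + 2 ^ p * τ * (∑' n, Bn n ^ p) := by
      rw [tsum_congr hc_fun, Summable.tsum_add hsummable1 hsummable2, tsum_mul_left, tsum_mul_left]
    have eSig1 : (∑' n, Bn n ^ p) * τ = Sig1 := by
      rw [hSig1_def, tsum_mul_right]
    have e3 : ∑' n, w n ≤ Cq * Ta := hw_tsum
    have e4 : 2 ^ p * τ * (∑' n, w n) ≤ 2 ^ p * (Cq * Sig2) := by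
      have h5 : τ * (∑' n, w n) ≤ Cq * Sig2 := by
        calc τ * (∑' n, w n) ≤ τ * (Cq * Ta) :=
              mul_le_mul_of_nonneg_left e3 hτ.le
          _ = Cq * (τ * Ta) := by ring
          _ ≤ Cq * Sig2 := mul_le_mul_of_nonneg_left hτTa hCq.le
      calc 2 ^ p * τ * (∑' n, w n) = 2 ^ p * (τ * (∑' n, w n)) := by ring
        _ ≤ 2 ^ p * (Cq * Sig2) := mul_le_mul_of_nonneg_left h5 h2p.le
    rw [e]
    have e5 : 2 ^ p * τ * (∑' n, Bn n ^ p) = 2 ^ p * Sig1 := by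
      rw [← eSig1]; ring
    rw [e5, hM_def]
    nlinarith [e4, mul_nonneg (mul_nonneg h2p.le hCq.le) hSig10, mul_nonneg h2p.le hSig20]
  -- final chain in ℝ≥0∞
  have hofReal : ∑' n : ℕ, ENNReal.ofReal (c n * τ) = ENNReal.ofReal (∑' n, c n * τ) :=
    (ENNReal.ofReal_tsum_of_nonneg hcτ0 hc_summable).symm
  have htsum0 : 0 ≤ ∑' n, c n * τ := tsum_nonneg hcτ0
  have h1p0 : (0:ℝ) ≤ 1 / p := by positivity
  have h1p1 : 1 / p ≤ 1 := by
    rw [div_le_one hp0]; linarith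
  show _ ≤ ENNReal.ofReal (M ^ (1 / p) * (Sig1 ^ (1 / p) + Sig2 ^ (1 / p)))
  calc (∫⁻ t in Ioi (0 : ℝ), ENNReal.ofReal
          ((t ^ (-1 + 1 / p) *
            sInf {c : ℝ | ∃ a b : X, v 1 = a + b ∧ c = ‖a‖ + t * ‖A b‖}) ^ p / t)) ^ (1 / p)
      ≤ (∑' n : ℕ, ENNReal.ofReal (c n * τ)) ^ (1 / p) :=
        ENNReal.rpow_le_rpow hInt h1p0
    _ = ENNReal.ofReal ((∑' n, c n * τ) ^ (1 / p)) := by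
        rw [hofReal, ENNReal.ofReal_rpow_of_nonneg htsum0 h1p0]
    _ ≤ ENNReal.ofReal ((M * (Sig1 + Sig2)) ^ (1 / p)) :=
        ENNReal.ofReal_le_ofReal (Real.rpow_le_rpow htsum0 htsum_c h1p0)
    _ ≤ ENNReal.ofReal (M ^ (1 / p) * (Sig1 ^ (1 / p) + Sig2 ^ (1 / p))) := by
        apply ENNReal.ofReal_le_ofReal
        rw [Real.mul_rpow hM.le (by positivity)]
        exact mul_le_mul_of_nonneg_left
          (rpow_add_le_add_rpow' hSig10 hSig20 h1p0 h1p1)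
          (Real.rpow_nonneg hM.le _)
end
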